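/- Let A, B, C, M be points of a real inner product space, let t₁, t₂, t₃ be real numbers with t := t₁+t₂+t₃ ≠ 0, and let P be the barycenter of {A,B,C} with weights (t₁,t₂,t₃). Then t² · MP² = t·(t₁·MA² + t₂·MB² + t₃·MC²) − (t₂t₃·a² + t₃t₁·b² + t₁t₂·c²), where a = BC, b = CA, c = AB and XY denotes the distance between points X and Y. -/

import Mathlib

/-- If `P` is the barycenter of `{A, B, C}` with weights `(t₁, t₂, t₃)` and
`t = t₁ + t₂ + t₃ ≠ 0`, then for any point `M`,
`t² · MP² = t·(t₁·MA² + t₂·MB² + t₃·MC²) − (t₂t₃·a² + t₃t₁·b² + t₁t₂·c²)`. -/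
theorem stmt_0 {E : Type*} [NormedAddCommGroup E] [InnerProductSpace ℝ E]
    (A B C M P : E) (t₁ t₂ t₃ : ℝ)
    (ht : t₁ + t₂ + t₃ ≠ 0)
    (hP : ∀ N : E, (t₁ + t₂ + t₃) • (P - N) = t₁ • (A - N) + t₂ • (B - N) + t₃ • (C - N)) :
    (t₁ + t₂ + t₃) ^ 2 * dist M P ^ 2 =
      (t₁ + t₂ + t₃) * (t₁ * dist M A ^ 2 + t₂ * dist M B ^ 2 + t₃ * dist M C ^ 2) -
        (t₂ * t₃ * dist B C ^ 2 + t₃ * t₁ * dist C A ^ 2 + t₁ * t₂ * dist A B ^ 2) := by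
  have h := hP M
  have hn : ((t₁ + t₂ + t₃) ^ 2) * ‖P - M‖ ^ 2
      = ‖t₁ • (A - M) + t₂ • (B - M) + t₃ • (C - M)‖ ^ 2 := by
    rw [← h, norm_smul]
    simp [mul_pow, Real.norm_eq_abs, sq_abs]
  have key : ∀ x y : E, dist x y ^ 2 = ‖x - y‖ ^ 2 := fun x y => by rw [dist_eq_norm]
  rw [key M P, ← norm_sub_rev, hn, key M A, key M B, key M C, key B C, key C A, key A B]
  have hBC : B - C = (B - M) - (C - M) := by abel
  have hCA : C - A = (C - M) - (A - M) := by abel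
  have hAB : A - B = (A - M) - (B - M) := by abel
  have hMA : M - A = -(A - M) := by abel
  have hMB : M - B = -(B - M) := by abel
  have hMC : M - C = -(C - M) := by abel
  rw [hBC, hCA, hAB, hMA, hMB, hMC]
  set u := A - M
  set v := B - M
  set w := C - M
  have expand : ∀ x y : E, ‖x + y‖ ^ 2 = ‖x‖ ^ 2 + 2 * inner ℝ x y + ‖y‖ ^ 2 :=
    fun x y => norm_add_sq_real x y
  have expands : ∀ x y : E, ‖x - y‖ ^ 2 = ‖x‖ ^ 2 - 2 * inner ℝ x y + ‖y‖ ^ 2 :=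
    fun x y => norm_sub_sq_real x y
  simp only [expand, expands, norm_smul, Real.norm_eq_abs, mul_pow, sq_abs,
    inner_add_left, inner_add_right, inner_smul_left, inner_smul_right,
    RCLike.conj_to_real, norm_neg]
  simp only [real_inner_comm v u, real_inner_comm w u, real_inner_comm w v]
  ring
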